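/- Let v ∈ E, v̄ ∈ F, let x be a primal trajectory with initial data v, and let x̄ be a dual trajectory with initial data v̄. Then for every t ≥ 0, ⟪v̄, C (x t)⟫ = ⟪B* (x̄ t), v⟫; i.e., the pairing of the dual input with the primal output equals the pairing of the dual output with the primal input at every time. (Output pairing identity from the proof of Theorem 1.) -/

import Mathlib

open ContinuousLinearMap
open scoped RealInnerProductSpace

/-- Output pairing identity from the proof of Theorem 1. -/
theorem stmt_8
    {H E F : Type*}
    [NormedAddCommGroup H] [InnerProductSpace ℝ H] [CompleteSpace H]
    [NormedAddCommGroup E] [InnerProductSpace ℝ E] [FiniteDimensional ℝ E]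
    [NormedAddCommGroup F] [InnerProductSpace ℝ F] [FiniteDimensional ℝ F]
    (T A : H →L[ℝ] H) (B : E →L[ℝ] H) (C : H →L[ℝ] F)
    (v : E) (vb : F)
    (x : ℝ → H)
    (hx : ∀ t ≥ (0 : ℝ), HasDerivAt (fun s => T (x s)) (A (x t)) t)
    (hx0 : T (x 0) = B v)
    (xb xb' : ℝ → H)
    (hxbderiv : ∀ t : ℝ, HasDerivAt xb (xb' t) t)
    (hxbdyn : ∀ t ≥ (0 : ℝ), adjoint T (xb' t) = adjoint A (xb t))
    (hxb0 : adjoint T (xb 0) = adjoint C vb) :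
    ∀ t ≥ (0 : ℝ), ⟪vb, C (x t)⟫ = ⟪adjoint B (xb t), v⟫ := by
  intro t ht
  set g : ℝ → ℝ := fun s => ⟪xb (t - s), T (x s)⟫ with hg
  have hderiv : ∀ s ∈ Set.Icc (0 : ℝ) t, HasDerivAt g 0 s := by
    intro s hs
    have h1 : HasDerivAt (fun u => xb (t - u)) (-(xb' (t - s))) s := by
      have h0 : HasDerivAt (fun u : ℝ => t - u) (-1) s := by
        simpa using (hasDerivAt_id s).const_sub t
      have := (hxbderiv (t - s)).scomp s h0
      rw [neg_one_smul] at this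
      exact this
    have h2 := hx s hs.1
    have := h1.inner ℝ h2
    refine this.congr_deriv ?_
    have e1 : ⟪xb (t - s), A (x s)⟫ = ⟪adjoint A (xb (t - s)), x s⟫ :=
      (adjoint_inner_left A _ _).symm
    have e2 : ⟪-(xb' (t - s)), T (x s)⟫ = -⟪adjoint T (xb' (t - s)), x s⟫ := by
      rw [inner_neg_left, adjoint_inner_left]
    rw [e1, e2, hxbdyn (t - s) (by linarith [hs.2])]
    ring
  have hconst := constant_of_has_deriv_right_zero
    (f := g) (a := 0) (b := t)
    (fun s hs => ((hderiv s hs).continuousAt).continuousWithinAt)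
    (fun s hs => ((hderiv s ⟨hs.1, le_of_lt hs.2⟩).hasDerivWithinAt))
  have key : g t = g 0 := hconst t ⟨ht, le_refl t⟩
  have : ⟪xb 0, T (x t)⟫ = ⟪xb t, T (x 0)⟫ := by
    simpa [hg, sub_self] using key
  calc ⟪vb, C (x t)⟫ = ⟪adjoint C vb, x t⟫ := (adjoint_inner_left C _ _).symm
    _ = ⟪adjoint T (xb 0), x t⟫ := by rw [hxb0]
    _ = ⟪xb 0, T (x t)⟫ := adjoint_inner_left T _ _
    _ = ⟪xb t, T (x 0)⟫ := this
    _ = ⟪xb t, B v⟫ := by rw [hx0]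
    _ = ⟪adjoint B (xb t), v⟫ := (adjoint_inner_left B _ _).symm
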